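/- Ginsburg–Sands theorem (classical form): every infinite topological space X has a countably infinite subset Y such that Y, equipped with the subspace topology, is homeomorphic to one of the following five topological spaces: ℕ with the indiscrete topology; ℕ with the initial segment topology; ℕ with the final segment topology; ℕ with the discrete topology; or ℕ with the cofinite topology. -/

import Mathlib

/-- The initial segment topology on ℕ: generated by the sets `Set.Iic n`;
its open sets are exactly `∅`, `ℕ`, and the intervals `[0,n]`. -/
def initialSegTop : TopologicalSpace ℕ :=
  TopologicalSpace.generateFrom {s | ∃ n : ℕ, s = Set.Iic n}

/-- The final segment topology on ℕ: generated by the sets `Set.Ici n`;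
its open sets are exactly `∅`, `ℕ`, and the intervals `[n,∞)`. -/
def finalSegTop : TopologicalSpace ℕ :=
  TopologicalSpace.generateFrom {s | ∃ n : ℕ, s = Set.Ici n}

/-- The cofinite topology on ℕ: the open sets are `∅` and the sets with finite complement. -/
def cofiniteTop : TopologicalSpace ℕ where
  IsOpen s := s = ∅ ∨ sᶜ.Finite
  isOpen_univ := Or.inr (by simp)
  isOpen_inter s t hs ht := by
    rcases hs with rfl | hs
    · exact Or.inl (Set.empty_inter t)
    rcases ht with rfl | ht
    · exact Or.inl (Set.inter_empty s)
    · right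
      rw [Set.compl_inter]
      exact hs.union ht
  isOpen_sUnion S hS := by
    by_cases h : ∀ s ∈ S, s = ∅
    · exact Or.inl (Set.sUnion_eq_empty.mpr h)
    · push_neg at h
      obtain ⟨s, hsS, hsne⟩ := h
      rcases hS s hsS with rfl | hfin
      · simpa using hsne
      · exact Or.inr (hfin.subset (Set.compl_subset_compl.mpr (Set.subset_sUnion_of_mem hsS)))


open Set Topology

noncomputable def homeoOfIsOpenIff {α : Type*} [tα : TopologicalSpace α]
    {τ : TopologicalSpace ℕ} (e : α ≃ ℕ)
    (h : ∀ s : Set ℕ, IsOpen[τ] s ↔ IsOpen (e ⁻¹' s)) : @Homeomorph α ℕ tα τ where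
  toEquiv := e
  continuous_toFun := continuous_def.mpr fun s hs => (h s).mp hs
  continuous_invFun := by
    refine continuous_def.mpr fun s hs => ?_
    show IsOpen[τ] (⇑e.symm ⁻¹' s)
    rw [show (⇑e.symm ⁻¹' s : Set ℕ) = e '' s from (e.image_eq_preimage_symm s).symm]
    exact (h (e '' s)).mpr (by rwa [e.preimage_image])

lemma isUpperSet_iff_nat (s : Set ℕ) : IsUpperSet s ↔ (s = ∅ ∨ ∃ n, s = Set.Ici n) := by
  constructor
  · intro hs
    rcases s.eq_empty_or_nonempty with rfl | hne
    · exact Or.inl rfl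
    refine Or.inr ⟨sInf s, Set.Subset.antisymm (fun x hx => Nat.sInf_le hx) ?_⟩
    intro x hx
    exact hs hx (Nat.sInf_mem hne)
  · rintro (rfl | ⟨n, rfl⟩)
    · exact isUpperSet_empty
    · exact isUpperSet_Ici n

lemma isLowerSet_iff_nat (s : Set ℕ) :
    IsLowerSet s ↔ (s = ∅ ∨ s = Set.univ ∨ ∃ n, s = Set.Iic n) := by
  constructor
  · intro hs
    rcases s.eq_empty_or_nonempty with rfl | hne
    · exact Or.inl rfl
    by_cases hu : s = Set.univ
    · exact Or.inr (Or.inl hu)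
    have hc : {n | n ∉ s}.Nonempty := by
      by_contra h
      exact hu (Set.eq_univ_of_forall (fun x => not_not.mp (fun hx => h ⟨x, hx⟩)))
    set k := sInf {n | n ∉ s} with hk
    have hks : k ∉ s := Nat.sInf_mem hc
    have hk1 : 1 ≤ k := by
      rcases hne with ⟨y, hy⟩
      have h0 : 0 ∈ s := hs (Nat.zero_le y) hy
      exact Nat.one_le_iff_ne_zero.mpr (fun hz => hks (hz ▸ h0))
    refine Or.inr (Or.inr ⟨k - 1, ?_⟩)
    ext x
    simp only [Set.mem_Iic]
    constructor
    · intro hx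
      by_contra hlt
      exact hks (hs (by omega) hx)
    · intro hx
      by_contra hx'
      have := Nat.sInf_le (show x ∈ {n | n ∉ s} from hx')
      omega
  · rintro (rfl | rfl | ⟨n, rfl⟩)
    · exact isLowerSet_empty
    · exact isLowerSet_univ
    · exact isLowerSet_Iic n

lemma finalSegTop_isOpen_iff (s : Set ℕ) :
    IsOpen[finalSegTop] s ↔ (s = ∅ ∨ ∃ n, s = Set.Ici n) := by
  rw [← isUpperSet_iff_nat]
  constructor
  · intro h
    induction h with
    | basic u hu => obtain ⟨n, rfl⟩ := hu; exact isUpperSet_Ici n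
    | univ => exact isUpperSet_univ
    | inter u v _ _ hu hv => exact hu.inter hv
    | sUnion S _ hS => exact isUpperSet_sUnion hS
  · intro h
    rcases (isUpperSet_iff_nat s).mp h with rfl | ⟨n, rfl⟩
    · exact @isOpen_empty _ finalSegTop
    · exact TopologicalSpace.GenerateOpen.basic _ ⟨n, rfl⟩

lemma initialSegTop_isOpen_iff (s : Set ℕ) :
    IsOpen[initialSegTop] s ↔ (s = ∅ ∨ s = Set.univ ∨ ∃ n, s = Set.Iic n) := by
  rw [← isLowerSet_iff_nat]
  constructor
  · intro h
    induction h with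
    | basic u hu => obtain ⟨n, rfl⟩ := hu; exact isLowerSet_Iic n
    | univ => exact isLowerSet_univ
    | inter u v _ _ hu hv => exact hu.inter hv
    | sUnion S _ hS => exact isLowerSet_sUnion hS
  · intro h
    rcases (isLowerSet_iff_nat s).mp h with rfl | rfl | ⟨n, rfl⟩
    · exact @isOpen_empty _ initialSegTop
    · exact @isOpen_univ _ initialSegTop
    · exact TopologicalSpace.GenerateOpen.basic _ ⟨n, rfl⟩


lemma ramsey2 (c : ℕ → ℕ → Bool) :
    ∃ (g : ℕ → ℕ) (b : Bool), StrictMono g ∧ ∀ m n, m < n → c (g m) (g n) = b := by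
  classical
  -- step function
  let step : {S : Set ℕ // S.Infinite} → {S : Set ℕ // S.Infinite} × Bool := fun p =>
    if hT : {x ∈ p.1 | sInf p.1 < x ∧ c (sInf p.1) x = true}.Infinite then (⟨_, hT⟩, true)
    else
      (⟨{x ∈ p.1 | sInf p.1 < x ∧ c (sInf p.1) x = false}, by
        have h1 : (p.1 \ Set.Iic (sInf p.1)).Infinite := p.2.diff (Set.finite_Iic _)
        have h2 : p.1 \ Set.Iic (sInf p.1) ⊆
            {x ∈ p.1 | sInf p.1 < x ∧ c (sInf p.1) x = true} ∪
            {x ∈ p.1 | sInf p.1 < x ∧ c (sInf p.1) x = false} := by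
          rintro x ⟨hxS, hx⟩
          simp only [Set.mem_Iic, not_le] at hx
          rcases Bool.eq_false_or_eq_true (c (sInf p.1) x) with h | h
          · exact Or.inl ⟨hxS, hx, h⟩
          · exact Or.inr ⟨hxS, hx, h⟩
        intro hF
        exact h1 (((Set.not_infinite.mp hT).union hF).subset h2)⟩,
        false)
  have stepSpec : ∀ p, (step p).1.1 ⊆ p.1 ∧
      ∀ x ∈ (step p).1.1, sInf p.1 < x ∧ c (sInf p.1) x = (step p).2 := by
    intro p
    by_cases hT : {x ∈ p.1 | sInf p.1 < x ∧ c (sInf p.1) x = true}.Infinite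
    · simp only [step, dif_pos hT]
      exact ⟨fun x hx => hx.1, fun x hx => ⟨hx.2.1, hx.2.2⟩⟩
    · simp only [step, dif_neg hT]
      exact ⟨fun x hx => hx.1, fun x hx => ⟨hx.2.1, hx.2.2⟩⟩
  let A : ℕ → {S : Set ℕ // S.Infinite} := fun n =>
    Nat.rec ⟨Set.univ, Set.infinite_univ⟩ (fun _ p => (step p).1) n
  have hAsucc : ∀ n, A (n + 1) = (step (A n)).1 := fun n => rfl
  set a : ℕ → ℕ := fun n => sInf (A n).1 with ha
  set bcol : ℕ → Bool := fun n => (step (A n)).2 with hbcol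
  have hmem : ∀ n, a n ∈ (A n).1 := fun n => Nat.sInf_mem (A n).2.nonempty
  have hmono : ∀ m n, m ≤ n → (A n).1 ⊆ (A m).1 := by
    intro m n h
    induction n with
    | zero =>
      have : m = 0 := Nat.le_zero.mp h
      exact this ▸ Set.Subset.rfl
    | succ k ih =>
      rcases Nat.lt_or_ge m (k+1) with h' | h'
      · exact Set.Subset.trans (hAsucc k ▸ (stepSpec (A k)).1) (ih (by omega))
      · have : m = k + 1 := by omega
        exact this ▸ Set.Subset.rfl
  have key : ∀ m n, m < n → a m < a n ∧ c (a m) (a n) = bcol m := by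
    intro m n h
    have h1 : a n ∈ (A (m+1)).1 := hmono (m+1) n h (hmem n)
    have := (stepSpec (A m)).2 (a n) (hAsucc m ▸ h1)
    exact this
  have hstrict : StrictMono a := strictMono_nat_of_lt_succ (fun n => (key n (n+1) (by omega)).1)
  -- pigeonhole
  obtain ⟨b, hb⟩ : ∃ b : Bool, {n | bcol n = b}.Infinite := by
    by_contra h
    push_neg at h
    have h1 := (h true)
    have h2 := (h false)
    have : (Set.univ : Set ℕ) ⊆ {n | bcol n = true} ∪ {n | bcol n = false} := by
      intro n _
      rcases Bool.eq_false_or_eq_true (bcol n) with h | h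
      · exact Or.inl h
      · exact Or.inr h
    exact Set.infinite_univ ((h1.union h2).subset this)
  refine ⟨fun k => a (Nat.nth (· ∈ {n | bcol n = b}) k), b,
    hstrict.comp (Nat.nth_strictMono hb), ?_⟩
  intro m n hmn
  have hlt : Nat.nth (· ∈ {n | bcol n = b}) m < Nat.nth (· ∈ {n | bcol n = b}) n :=
    Nat.nth_strictMono hb hmn
  have hmem' : bcol (Nat.nth (· ∈ {n | bcol n = b}) m) = b :=
    Nat.nth_mem_of_infinite hb m
  rw [(key _ _ hlt).2, hmem']

lemma equivNat (α : Type*) [Countable α] [Infinite α] : Nonempty (α ≃ ℕ) :=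
  (nonempty_denumerable α).elim (fun d => ⟨@Denumerable.eqv α d⟩)

lemma t1_case {X : Type*} [TopologicalSpace X] (A : Set X) (hAc : A.Countable) (hAi : A.Infinite)
    (sep : ∀ x ∈ A, ∀ y ∈ A, x ≠ y → ∃ U, IsOpen U ∧ x ∈ U ∧ y ∉ U) :
    ∃ Y : Set X, Y.Countable ∧ Y.Infinite ∧
      (Nonempty (@Homeomorph Y ℕ _ (⊥ : TopologicalSpace ℕ)) ∨
       Nonempty (@Homeomorph Y ℕ _ cofiniteTop)) := by
  classical
  -- trimming lemma
  have trim : ∀ x ∈ A, ∀ F : Set X, F.Finite → F ⊆ A → x ∉ F →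
      ∃ V, IsOpen V ∧ x ∈ V ∧ ∀ z ∈ F, z ∉ V := by
    intro x hx F hF hFA hxF
    have hexist : ∀ z : X, ∃ U, IsOpen U ∧ x ∈ U ∧ (z ∈ F → z ∉ U) := by
      intro z
      by_cases hz : z ∈ F
      · obtain ⟨U, hU1, hU2, hU3⟩ := sep x hx z (hFA hz) (fun h => hxF (h ▸ hz))
        exact ⟨U, hU1, hU2, fun _ => hU3⟩
      · exact ⟨Set.univ, isOpen_univ, Set.mem_univ x, fun h => absurd h hz⟩
    choose U hU1 hU2 hU3 using hexist
    refine ⟨⋂ z ∈ F, U z, hF.isOpen_biInter (fun z _ => hU1 z), ?_, ?_⟩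
    · exact Set.mem_biInter (fun z _ => hU2 z)
    · intro z hz hzV
      exact (hU3 z hz) (Set.mem_iInter₂.mp hzV z hz)
  by_cases hdisc : ∃ S, S ⊆ A ∧ S.Infinite ∧ ∀ x ∈ S, ∃ U, IsOpen U ∧ x ∈ U ∧ U ∩ S ⊆ {x}
  · -- discrete case
    obtain ⟨S, hSA, hSi, hSd⟩ := hdisc
    have hc : Countable ↥S := (hAc.mono hSA).to_subtype
    have hi : Infinite ↥S := hSi.to_subtype
    obtain ⟨e⟩ := equivNat ↥S
    refine ⟨S, hAc.mono hSA, hSi, Or.inl ⟨homeoOfIsOpenIff e (fun s => ?_)⟩⟩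
    have hall : ∀ t : Set ↥S, IsOpen t := by
      intro t
      have hch : ∀ p : ↥S, ∃ U, IsOpen U ∧ (p : X) ∈ U ∧ U ∩ S ⊆ {(p : X)} :=
        fun p => hSd p p.2
      choose U hU1 hU2 hU3 using hch
      refine isOpen_induced_iff.mpr ⟨⋃ p ∈ t, U p, isOpen_biUnion (fun p _ => hU1 p), ?_⟩
      ext q
      simp only [Set.mem_preimage, Set.mem_iUnion]
      constructor
      · rintro ⟨p, hp, hq⟩
        have hqp : (q : X) ∈ U p ∩ S := ⟨hq, q.2⟩
        have : (q : X) = (p : X) := hU3 p hqp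
        rwa [show q = p from Subtype.ext this]
      · intro hq
        exact ⟨q, hq, hU2 q⟩
    exact iff_of_true (@isOpen_discrete ℕ ⊥ (discreteTopology_bot ℕ) s) (hall _)
  · -- no infinite discrete subset: construct cofinite subspace
    have hind : ∃ Y, Y ⊆ A ∧ Y.Infinite ∧
        ∀ U, IsOpen U → (U ∩ Y).Finite ∨ (Y \ U).Finite := by
      by_contra hcon
      push_neg at hcon
      have hcon' : ∀ p : {Y : Set X // Y ⊆ A ∧ Y.Infinite},
          ∃ q : {Y : Set X // Y ⊆ A ∧ Y.Infinite} × X × Set X,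
            IsOpen q.2.2 ∧ q.2.1 ∈ q.2.2 ∩ p.1 ∧ q.1.1 = p.1 \ q.2.2 := by
        intro p
        obtain ⟨U, hUo, h1, h2⟩ := hcon p.1 p.2.1 p.2.2
        obtain ⟨z, hz⟩ := (show (U ∩ p.1).Infinite from h1).nonempty
        exact ⟨(⟨p.1 \ U, Set.diff_subset.trans p.2.1,
          (show (p.1 \ U).Infinite from h2)⟩, z, U), hUo, hz, rfl⟩
      choose step2 hstep2 using hcon'
      let B : ℕ → {Y : Set X // Y ⊆ A ∧ Y.Infinite} := fun n =>
        Nat.rec ⟨A, Set.Subset.rfl, hAi⟩ (fun _ p => (step2 p).1) n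
      have hBsucc : ∀ n, (B (n+1)).1 = (B n).1 \ (step2 (B n)).2.2 :=
        fun n => (hstep2 (B n)).2.2
      set a : ℕ → X := fun n => (step2 (B n)).2.1 with ha
      set U : ℕ → Set X := fun n => (step2 (B n)).2.2 with hU
      have haU : ∀ n, a n ∈ U n ∩ (B n).1 := fun n => (hstep2 (B n)).2.1
      have hUo : ∀ n, IsOpen (U n) := fun n => (hstep2 (B n)).1
      have hBmono : ∀ m n, m ≤ n → (B n).1 ⊆ (B m).1 := by
        intro m n h
        induction n with
        | zero =>
          have : m = 0 := Nat.le_zero.mp h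
          exact this ▸ Set.Subset.rfl
        | succ k ih =>
          rcases Nat.lt_or_ge m (k+1) with h' | h'
          · exact Set.Subset.trans ((hBsucc k) ▸ Set.diff_subset) (ih (by omega))
          · have : m = k + 1 := by omega
            exact this ▸ Set.Subset.rfl
      have hlater : ∀ m n, m < n → a n ∉ U m := by
        intro m n h
        have h1 : a n ∈ (B (m+1)).1 := hBmono (m+1) n h (haU n).2
        rw [hBsucc m] at h1
        exact h1.2
      have hainj : Function.Injective a := by
        intro m n hmn
        by_contra hne
        rcases Nat.lt_or_ge m n with h | h
        · exact hlater m n h (hmn ▸ (haU m).1)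
        · exact hlater n m (by omega) (hmn ▸ (haU n).1)
      have haA : ∀ n, a n ∈ A := fun n => (B n).2.1 (haU n).2
      refine hdisc ⟨Set.range a, ?_, Set.infinite_range_of_injective hainj, ?_⟩
      · rintro _ ⟨n, rfl⟩; exact haA n
      · rintro _ ⟨n, rfl⟩
        have hF : (a '' Set.Iio n).Finite := (Set.finite_Iio n).image a
        have hFA : a '' Set.Iio n ⊆ A := by rintro _ ⟨i, _, rfl⟩; exact haA i
        have hxF : a n ∉ a '' Set.Iio n := by
          rintro ⟨i, hi, hin⟩
          exact (Nat.lt_irrefl n) (by rw [hainj hin] at hi; exact hi)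
        obtain ⟨V, hVo, hVx, hVF⟩ := trim (a n) (haA n) _ hF hFA hxF
        refine ⟨U n ∩ V, (hUo n).inter hVo, ⟨(haU n).1, hVx⟩, ?_⟩
        rintro z ⟨⟨hz1, hz2⟩, i, rfl⟩
        rcases Nat.lt_trichotomy i n with h | h | h
        · exact absurd hz2 (fun h2 => hVF (a i) ⟨i, h, rfl⟩ h2)
        · rw [h]; rfl
        · exact absurd hz1 (hlater n i h)
    obtain ⟨Y, hYA, hYi, hYind⟩ := hind
    set iso := {z ∈ Y | ∃ U, IsOpen U ∧ z ∈ U ∧ U ∩ Y ⊆ {z}} with hiso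
    have hisofin : iso.Finite := by
      by_contra hinf
      refine hdisc ⟨iso, (fun z hz => hYA hz.1), hinf, ?_⟩
      intro z hz
      obtain ⟨U, hU1, hU2, hU3⟩ := hz.2
      exact ⟨U, hU1, hU2, fun w hw => hU3 ⟨hw.1, hw.2.1⟩⟩
    set Y' := Y \ iso with hY'
    have hY'i : Y'.Infinite := hYi.diff hisofin
    have hY'A : Y' ⊆ A := fun z hz => hYA hz.1
    have hY'c : Y'.Countable := hAc.mono hY'A
    -- P1
    have P1 : ∀ z ∈ Y', ∀ U, IsOpen U → z ∈ U → (Y' \ U).Finite := by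
      intro z hz U hUo hzU
      have hUY : (U ∩ Y).Infinite := by
        by_contra hfin
        have hfin' : ((U ∩ Y) \ {z}).Finite := (Set.not_infinite.mp hfin).diff
        have hFA : (U ∩ Y) \ {z} ⊆ A := fun w hw => hYA hw.1.2
        have hzF : z ∉ (U ∩ Y) \ {z} := fun h => h.2 rfl
        obtain ⟨V, hVo, hVz, hVF⟩ := trim z (hY'A hz) _ hfin' hFA hzF
        refine hz.2 ⟨hz.1, U ∩ V, hUo.inter hVo, ⟨hzU, hVz⟩, ?_⟩
        rintro w ⟨⟨hw1, hw2⟩, hwY⟩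
        by_contra hwz
        exact hVF w ⟨⟨hw1, hwY⟩, hwz⟩ hw2
      rcases hYind U hUo with h | h
      · exact absurd h hUY
      · exact h.subset (fun w hw => ⟨hw.1.1, hw.2⟩)
    have hc : Countable ↥Y' := hY'c.to_subtype
    have hi : Infinite ↥Y' := hY'i.to_subtype
    obtain ⟨e⟩ := equivNat ↥Y'
    refine ⟨Y', hY'c, hY'i, Or.inr ⟨homeoOfIsOpenIff e (fun s => ?_)⟩⟩
    have key : ∀ t : Set ↥Y', IsOpen t ↔ (t = ∅ ∨ tᶜ.Finite) := by
      intro t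
      constructor
      · intro ht
        obtain ⟨U, hUo, hpre⟩ := isOpen_induced_iff.mp ht
        rcases t.eq_empty_or_nonempty with rfl | ⟨q, hq⟩
        · exact Or.inl rfl
        · right
          have hqU : (q : X) ∈ U := by
            rw [← hpre] at hq; exact hq
          have hfin := P1 q q.2 U hUo hqU
          have htc : tᶜ = Subtype.val ⁻¹' (Y' \ U) := by
            ext p
            constructor
            · intro h
              exact ⟨p.2, fun hU' => h (by rw [← hpre]; exact hU')⟩
            · intro h hc2
              rw [← hpre] at hc2
              exact h.2 hc2
          rw [htc]
          exact hfin.preimage (Set.injOn_of_injective Subtype.val_injective)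
      · rintro (rfl | hfin)
        · exact isOpen_empty
        · have hFfin : (Subtype.val '' tᶜ).Finite := hfin.image _
          have hFY' : Subtype.val '' tᶜ ⊆ Y' := by rintro _ ⟨p, _, rfl⟩; exact p.2
          have hFA : Subtype.val '' tᶜ ⊆ A := hFY'.trans hY'A
          have hstep : ∀ q : ↥Y', q ∈ t → ∃ V, IsOpen V ∧ (q:X) ∈ V ∧
              ∀ z ∈ Subtype.val '' tᶜ, z ∉ V := by
            intro q hq
            refine trim (q : X) (hY'A q.2) _ hFfin hFA ?_
            rintro ⟨p, hp, hpq⟩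
            exact hp (by rw [show p = q from Subtype.ext hpq]; exact hq)
          choose V hV1 hV2 hV3 using hstep
          refine isOpen_induced_iff.mpr ⟨⋃ (q : ↥Y') (hq : q ∈ t), V q hq,
            isOpen_iUnion (fun q => isOpen_iUnion (fun hq => hV1 q hq)), ?_⟩
          ext p
          simp only [Set.mem_preimage, Set.mem_iUnion]
          constructor
          · rintro ⟨q, hq, hp⟩
            by_contra hpt
            exact hV3 q hq (p : X) ⟨p, hpt, rfl⟩ hp
          · intro hp
            exact ⟨p, hp, hV2 p hp⟩
    show (s = ∅ ∨ sᶜ.Finite) ↔ _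
    rw [key]
    constructor
    · rintro (rfl | hfin)
      · exact Or.inl (by simp)
      · refine Or.inr ?_
        rw [← Set.preimage_compl]
        exact hfin.preimage (Set.injOn_of_injective e.injective)
    · rintro (h | h)
      · left
        have h2 := congrArg (Set.image e) h
        rwa [Set.image_preimage_eq s e.surjective, Set.image_empty] at h2
      · right
        rw [← Set.preimage_compl] at h
        have h2 := h.image e
        rwa [Set.image_preimage_eq sᶜ e.surjective] at h2

lemma ofInj_val {X : Type*} (y : ℕ → X) (inj : Function.Injective y)
    (p : ↥(Set.range y)) : (p : X) = y ((Equiv.ofInjective y inj).symm p) := by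
  have h := (Equiv.ofInjective y inj).apply_symm_apply p
  exact (congrArg Subtype.val h).symm

lemma ofInj_idx {X : Type*} (y : ℕ → X) (inj : Function.Injective y) (m : ℕ) :
    (Equiv.ofInjective y inj).symm ⟨y m, ⟨m, rfl⟩⟩ = m := by
  have : (⟨y m, ⟨m, rfl⟩⟩ : ↥(Set.range y)) = Equiv.ofInjective y inj m :=
    Subtype.ext (by simp [Equiv.ofInjective_apply])
  rw [this, Equiv.symm_apply_apply]

lemma chain_final {X : Type*} [TopologicalSpace X] (y : ℕ → X) (inj : Function.Injective y)
    (hup : ∀ m n, m < n → ∀ U, IsOpen U → y m ∈ U → y n ∈ U)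
    (hsep : ∀ n, ∃ U, IsOpen U ∧ y (n+1) ∈ U ∧ y n ∉ U) :
    Nonempty (@Homeomorph (Set.range y) ℕ _ finalSegTop) := by
  set e : ↥(Set.range y) ≃ ℕ := (Equiv.ofInjective y inj).symm with he
  refine ⟨homeoOfIsOpenIff e (fun s => ?_)⟩
  have hupcl : ∀ U, IsOpen U → ∀ m n, m ≤ n → y m ∈ U → y n ∈ U := by
    intro U hU m n hmn hm
    rcases Nat.lt_or_ge m n with h | h
    · exact hup m n h U hU hm
    · have : m = n := by omega
      exact this ▸ hm
  rw [finalSegTop_isOpen_iff]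
  constructor
  · rintro (rfl | ⟨n, rfl⟩)
    · simp only [Set.preimage_empty]; exact isOpen_empty
    · match n with
      | 0 =>
        have : e ⁻¹' Set.Ici 0 = Set.univ := by
          ext p; simp
        rw [this]; exact isOpen_univ
      | Nat.succ n =>
        obtain ⟨U, hUo, hU1, hU2⟩ := hsep n
        refine isOpen_induced_iff.mpr ⟨U, hUo, ?_⟩
        ext p
        rw [Set.mem_preimage, Set.mem_preimage, Set.mem_Ici]
        rw [show (p : X) = y (e p) from ofInj_val y inj p]
        constructor
        · intro hpU
          by_contra hlt
          exact hU2 (hupcl U hUo (e p) n (by omega) hpU)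
        · intro hle
          exact hupcl U hUo (n+1) (e p) hle hU1
  · intro h
    obtain ⟨U, hUo, hpre⟩ := isOpen_induced_iff.mp h
    have hmem : ∀ m, m ∈ s ↔ y m ∈ U := by
      intro m
      have h1 : (⟨y m, ⟨m, rfl⟩⟩ : ↥(Set.range y)) ∈ Subtype.val ⁻¹' U ↔
          (⟨y m, ⟨m, rfl⟩⟩ : ↥(Set.range y)) ∈ e ⁻¹' s := by rw [hpre]
      simp only [Set.mem_preimage, he, ofInj_idx y inj m] at h1
      exact h1.symm
    refine (isUpperSet_iff_nat s).mp ?_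
    intro a b hab ha
    rw [hmem] at ha ⊢
    exact hupcl U hUo a b hab ha

lemma chain_initial {X : Type*} [TopologicalSpace X] (y : ℕ → X) (inj : Function.Injective y)
    (hdown : ∀ m n, m < n → ∀ U, IsOpen U → y n ∈ U → y m ∈ U)
    (hsep : ∀ n, ∃ U, IsOpen U ∧ y n ∈ U ∧ y (n+1) ∉ U) :
    Nonempty (@Homeomorph (Set.range y) ℕ _ initialSegTop) := by
  set e : ↥(Set.range y) ≃ ℕ := (Equiv.ofInjective y inj).symm with he
  refine ⟨homeoOfIsOpenIff e (fun s => ?_)⟩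
  have hdncl : ∀ U, IsOpen U → ∀ m n, m ≤ n → y n ∈ U → y m ∈ U := by
    intro U hU m n hmn hm
    rcases Nat.lt_or_ge m n with h | h
    · exact hdown m n h U hU hm
    · have : m = n := by omega
      exact this ▸ hm
  rw [initialSegTop_isOpen_iff]
  constructor
  · rintro (rfl | rfl | ⟨n, rfl⟩)
    · simp only [Set.preimage_empty]; exact isOpen_empty
    · simp only [Set.preimage_univ]; exact isOpen_univ
    · obtain ⟨U, hUo, hU1, hU2⟩ := hsep n
      refine isOpen_induced_iff.mpr ⟨U, hUo, ?_⟩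
      ext p
      rw [Set.mem_preimage, Set.mem_preimage, Set.mem_Iic]
      rw [show (p : X) = y (e p) from ofInj_val y inj p]
      constructor
      · intro hpU
        by_contra hlt
        exact hU2 (hdncl U hUo (n+1) (e p) (by omega) hpU)
      · intro hle
        exact hdncl U hUo (e p) n hle hU1
  · intro h
    obtain ⟨U, hUo, hpre⟩ := isOpen_induced_iff.mp h
    have hmem : ∀ m, m ∈ s ↔ y m ∈ U := by
      intro m
      have h1 : (⟨y m, ⟨m, rfl⟩⟩ : ↥(Set.range y)) ∈ Subtype.val ⁻¹' U ↔
          (⟨y m, ⟨m, rfl⟩⟩ : ↥(Set.range y)) ∈ e ⁻¹' s := by rw [hpre]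
      simp only [Set.mem_preimage, he, ofInj_idx y inj m] at h1
      exact h1.symm
    refine (isLowerSet_iff_nat s).mp ?_
    intro a b hab hb
    rw [hmem] at hb ⊢
    exact hdncl U hUo b a hab hb

/-- **Ginsburg–Sands theorem** (classical form): every infinite topological space `X` has a
countably infinite subset `Y` which, with the subspace topology, is homeomorphic to `ℕ` with
one of the five topologies: indiscrete (`⊤`), initial segment, final segment, discrete (`⊥`),
or cofinite. -/
theorem ginsburg_sands {X : Type*} [TopologicalSpace X] [Infinite X] :
    ∃ Y : Set X, Y.Countable ∧ Y.Infinite ∧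
      (Nonempty (@Homeomorph Y ℕ _ (⊤ : TopologicalSpace ℕ)) ∨
       Nonempty (@Homeomorph Y ℕ _ initialSegTop) ∨
       Nonempty (@Homeomorph Y ℕ _ finalSegTop) ∨
       Nonempty (@Homeomorph Y ℕ _ (⊥ : TopologicalSpace ℕ)) ∨
       Nonempty (@Homeomorph Y ℕ _ cofiniteTop)) := by
  classical
  set r : X → X → Prop := fun x z => ∀ U : Set X, IsOpen U → x ∈ U → z ∈ U with hr
  set eqv : X → X → Prop := fun x z => r x z ∧ r z x with heqv
  by_cases hbig : ∃ x, {z | eqv x z}.Infinite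
  · -- indiscrete case
    obtain ⟨x, hx⟩ := hbig
    set f : ℕ → X := fun n => (Set.Infinite.natEmbedding {z | eqv x z} hx n).1 with hf
    have finj : Function.Injective f := fun m n h =>
      (Set.Infinite.natEmbedding {z | eqv x z} hx).injective (Subtype.ext h)
    have hfC : ∀ n, eqv x (f n) := fun n => (Set.Infinite.natEmbedding {z | eqv x z} hx n).2
    have hpair : ∀ m n, r (f m) (f n) := by
      intro m n U hU hm
      exact (hfC n).1 U hU ((hfC m).2 U hU hm)
    refine ⟨Set.range f, Set.countable_range f, Set.infinite_range_of_injective finj,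
      Or.inl ?_⟩
    have hc : Countable ↥(Set.range f) := (Set.countable_range f).to_subtype
    have hi : Infinite ↥(Set.range f) := (Set.infinite_range_of_injective finj).to_subtype
    obtain ⟨e⟩ := equivNat ↥(Set.range f)
    refine ⟨homeoOfIsOpenIff e (fun s => ?_)⟩
    rw [TopologicalSpace.isOpen_top_iff]
    constructor
    · rintro (rfl | rfl)
      · simp only [Set.preimage_empty]; exact isOpen_empty
      · simp only [Set.preimage_univ]; exact isOpen_univ
    · intro h
      obtain ⟨U, hUo, hpre⟩ := isOpen_induced_iff.mp h
      by_cases hne : ∃ p : ↥(Set.range f), (p : X) ∈ U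
      · right
        apply Set.eq_univ_of_forall
        intro m
        have hall : ∀ q : ↥(Set.range f), q ∈ e ⁻¹' s := by
          intro q
          rw [← hpre]
          obtain ⟨p, hp⟩ := hne
          obtain ⟨i, hi'⟩ := p.2
          obtain ⟨j, hj⟩ := q.2
          show (q : X) ∈ U
          rw [← hj]
          exact hpair i j U hUo (by rw [hi']; exact hp)
        have := hall (e.symm m)
        simpa using this
      · left
        push_neg at hne
        apply Set.eq_empty_iff_forall_notMem.mpr
        intro m hm
        have hmem : e.symm m ∈ e ⁻¹' s := by simpa using hm
        rw [← hpre] at hmem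
        exact hne (e.symm m) hmem
  · -- all equivalence classes finite
    push_neg at hbig
    have heq : Equivalence eqv := ⟨fun x => ⟨fun U _ h => h, fun U _ h => h⟩,
      fun h => ⟨h.2, h.1⟩, fun h1 h2 => ⟨fun U hU h => h2.1 U hU (h1.1 U hU h),
        fun U hU h => h1.2 U hU (h2.2 U hU h)⟩⟩
    set st : Setoid X := ⟨eqv, heq⟩ with hst
    have hqinf : Infinite (Quotient st) := by
      by_contra hfin
      rw [not_infinite_iff_finite] at hfin
      have huniv : (Set.univ : Set X) ⊆ ⋃ q ∈ (Set.univ : Set (Quotient st)),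
          {z | Quotient.mk st z = q} := by
        intro z _
        exact Set.mem_biUnion (Set.mem_univ _) rfl
      have hfib : ∀ q : Quotient st, {z | Quotient.mk st z = q}.Finite := by
        intro q
        obtain ⟨w, rfl⟩ := Quotient.exists_rep q
        have hsub : {z | Quotient.mk st z = Quotient.mk st w} ⊆ {z | eqv w z} := by
          intro z hz
          have hzw : eqv z w := Quotient.exact hz
          exact ⟨hzw.2, hzw.1⟩
        exact (hbig w).subset hsub
      exact Set.infinite_univ (((Set.finite_univ).biUnion (fun q _ => hfib q)).subset huniv)
    set x : ℕ → X := fun n => (Infinite.natEmbedding (Quotient st) n).out with hxdef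
    have xinj : Function.Injective x := fun m n h =>
      (Infinite.natEmbedding (Quotient st)).injective (Quotient.out_injective h)
    have hne2 : ∀ m n : ℕ, eqv (x m) (x n) → m = n := by
      intro m n h
      apply (Infinite.natEmbedding (Quotient st)).injective
      have hmk := @Quotient.sound X st (x m) (x n) h
      rwa [Quotient.out_eq, Quotient.out_eq] at hmk
    obtain ⟨g1, b1, hg1, hb1⟩ := ramsey2 (fun i j => decide (r (x i) (x j) ∨ r (x j) (x i)))
    cases b1 with
    | false =>
      -- antichain: T1 case
      set a : ℕ → X := fun k => x (g1 k) with hadef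
      have ainj : Function.Injective a := xinj.comp hg1.injective
      have hnc : ∀ i j, i ≠ j → ¬ r (a i) (a j) := by
        intro i j hij hri
        rcases Nat.lt_or_ge i j with h | h
        · have hc := hb1 i j h
          rw [decide_eq_false_iff_not] at hc
          exact hc (Or.inl hri)
        · have hc := hb1 j i (by omega)
          rw [decide_eq_false_iff_not] at hc
          exact hc (Or.inr hri)
      have sep : ∀ z ∈ Set.range a, ∀ w ∈ Set.range a, z ≠ w →
          ∃ U, IsOpen U ∧ z ∈ U ∧ w ∉ U := by
        rintro _ ⟨i, rfl⟩ _ ⟨j, rfl⟩ hzw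
        have hij : i ≠ j := fun h => hzw (by rw [h])
        have hnr := hnc i j hij
        simp only [hr] at hnr
        push_neg at hnr
        obtain ⟨U, hU1, hU2, hU3⟩ := hnr
        exact ⟨U, hU1, hU2, hU3⟩
      obtain ⟨Y, h1, h2, h3⟩ := t1_case (Set.range a) (Set.countable_range a)
        (Set.infinite_range_of_injective ainj) sep
      exact ⟨Y, h1, h2, h3.elim (fun h => Or.inr (Or.inr (Or.inr (Or.inl h))))
        (fun h => Or.inr (Or.inr (Or.inr (Or.inr h))))⟩
    | true =>
      obtain ⟨g2, b2, hg2, hb2⟩ := ramsey2 (fun i j => decide (r (x (g1 i)) (x (g1 j))))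
      set yy : ℕ → X := fun k => x (g1 (g2 k)) with hyydef
      have yinj : Function.Injective yy := xinj.comp (hg1.comp hg2).injective
      have hcomp : ∀ m n, m < n → r (yy m) (yy n) ∨ r (yy n) (yy m) := by
        intro m n h
        have hc := hb1 (g2 m) (g2 n) (hg2 h)
        rwa [decide_eq_true_eq] at hc
      have hanti : ∀ m n, m ≠ n → ¬ (r (yy m) (yy n) ∧ r (yy n) (yy m)) := by
        intro m n hmn h
        exact hmn (hg2.injective (hg1.injective (hne2 _ _ h)))
      cases b2 with
      | true =>
        have hup : ∀ m n, m < n → ∀ U : Set X, IsOpen U → yy m ∈ U → yy n ∈ U := by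
          intro m n h
          have hc := hb2 m n h
          rw [decide_eq_true_eq] at hc
          exact hc
        have hsep : ∀ n, ∃ U, IsOpen U ∧ yy (n+1) ∈ U ∧ yy n ∉ U := by
          intro n
          have h1 : r (yy n) (yy (n+1)) := by
            have hc := hb2 n (n+1) (by omega)
            rwa [decide_eq_true_eq] at hc
          have h2 : ¬ r (yy (n+1)) (yy n) := fun h =>
            hanti (n+1) n (by omega) ⟨h, h1⟩
          simp only [hr] at h2
          push_neg at h2
          exact h2
        obtain ⟨h⟩ := chain_final yy yinj hup hsep
        exact ⟨Set.range yy, Set.countable_range yy,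
          Set.infinite_range_of_injective yinj, Or.inr (Or.inr (Or.inl ⟨h⟩))⟩
      | false =>
        have hnr : ∀ m n, m < n → ¬ r (yy m) (yy n) := by
          intro m n h
          have hc := hb2 m n h
          rwa [decide_eq_false_iff_not] at hc
        have hdown : ∀ m n, m < n → ∀ U : Set X, IsOpen U → yy n ∈ U → yy m ∈ U := by
          intro m n h
          exact (hcomp m n h).resolve_left (hnr m n h)
        have hsep : ∀ n, ∃ U, IsOpen U ∧ yy n ∈ U ∧ yy (n+1) ∉ U := by
          intro n
          have h2 := hnr n (n+1) (by omega)
          simp only [hr] at h2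
          push_neg at h2
          exact h2
        obtain ⟨h⟩ := chain_initial yy yinj hdown hsep
        exact ⟨Set.range yy, Set.countable_range yy,
          Set.infinite_range_of_injective yinj, Or.inr (Or.inl ⟨h⟩)⟩
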